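/- K₁ is strictly included in K₂: every session process in K₁ is in K₂, and there exists a session process in K₂ that is not in K₁; in particular, P₂ = (νa₁b₁)(νa₂b₂)(a₁(x).ā₂⟨x⟩ | b̄₁⟨n⟩.b₂(z)) lies in K₂ \ K₁. -/

import Mathlib

namespace Paper

abbrev Name := ℕ
abbrev Label := ℕ

/-! ## Session π-calculus: syntax -/

inductive SProc : Type where
  | nil : SProc
  | output : Name → Name → SProc → SProc
  | input : Name → Name → SProc → SProc
  | select : Name → Label → SProc → SProc
  | branch : Name → Finset Label → (Label → SProc) → SProc
  | par : SProc → SProc → SProc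
  | res : Name → Name → SProc → SProc

namespace SProc

/-- Free names. -/
def fn : SProc → Set Name
  | nil => ∅
  | output x v P => {x, v} ∪ P.fn
  | input x y P => {x} ∪ (P.fn \ {y})
  | select x _ P => {x} ∪ P.fn
  | branch x I Ps => {x} ∪ ⋃ i ∈ I, (Ps i).fn
  | par P Q => P.fn ∪ Q.fn
  | res x y P => P.fn \ {x, y}

/-- Renaming of a single name. -/
def rn (v z a : Name) : Name := if a = z then v else a

/-- Substitution `P[v/z]` of the name `v` for the name `z`. -/
def subst (v z : Name) : SProc → SProc
  | nil => nil
  | output x w P => output (rn v z x) (rn v z w) (P.subst v z)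
  | input x y P => input (rn v z x) y (if y = z then P else P.subst v z)
  | select x l P => select (rn v z x) l (P.subst v z)
  | branch x I Ps => branch (rn v z x) I (fun i => (Ps i).subst v z)
  | par P Q => par (P.subst v z) (Q.subst v z)
  | res a b P => res a b (if z = a ∨ z = b then P else P.subst v z)

end SProc

/-- Structural congruence for the session π-calculus. -/
inductive SC : SProc → SProc → Prop where
  | refl (P) : SC P P
  | symm : SC P Q → SC Q P
  | trans : SC P Q → SC Q R → SC P R
  | parComm (P Q) : SC (.par P Q) (.par Q P)
  | parAssoc (P Q R) : SC (.par (.par P Q) R) (.par P (.par Q R))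
  | parNil (P) : SC (.par P .nil) P
  | resPar (x y : Name) (P Q) : x ∉ Q.fn → y ∉ Q.fn →
      SC (.par (.res x y P) Q) (.res x y (.par P Q))
  | resNil (x y) : SC (.res x y .nil) .nil
  | resComm (x y a b P) : SC (.res x y (.res a b P)) (.res a b (.res x y P))
  | parCong : SC P P' → SC Q Q' → SC (.par P Q) (.par P' Q')
  | resCong (x y) : SC P Q → SC (.res x y P) (.res x y Q)

/-- Reduction for the session π-calculus. -/
inductive SRed : SProc → SProc → Prop where
  | com (x y v z : Name) (P Q) :
      SRed (.res x y (.par (.output x v P) (.input y z Q)))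
           (.res x y (.par P (Q.subst v z)))
  | case (x y : Name) (j : Label) (I : Finset Label) (P) (Ps : Label → SProc) :
      j ∈ I →
      SRed (.res x y (.par (.select x j P) (.branch y I Ps)))
           (.res x y (.par P (Ps j)))
  | par : SRed P Q → SRed (.par P R) (.par Q R)
  | res (x y) : SRed P Q → SRed (.res x y P) (.res x y Q)
  | str : SC P P' → SRed P' Q' → SC Q' Q → SRed P Q

/-! ## Session types -/

inductive SType : Type where
  | endT : SType
  | recv : SType → SType → SType        -- ?T.S
  | send : SType → SType → SType        -- !T.S
  | branchT : Finset Label → (Label → SType) → SType   -- &{l_i : S_i}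
  | selectT : Finset Label → (Label → SType) → SType   -- ⊕{l_i : S_i}

/-- Session type duality. -/
def SType.dual : SType → SType
  | .endT => .endT
  | .recv T S => .send T S.dual
  | .send T S => .recv T S.dual
  | .branchT I S => .selectT I (fun i => (S i).dual)
  | .selectT I S => .branchT I (fun i => (S i).dual)

/-- Session typing contexts. -/
abbrev Ctx := Name → Option SType

def Ctx.update (Γ : Ctx) (x : Name) (T : Option SType) : Ctx :=
  fun y => if y = x then T else Γ y

/-- The context splitting operation Γ = Γ₁ ∘ Γ₂: every assignment goes to exactly one side. -/
def Ctx.split (Γ Γ₁ Γ₂ : Ctx) : Prop :=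
  ∀ x, (Γ₁ x = Γ x ∧ Γ₂ x = none) ∨ (Γ₂ x = Γ x ∧ Γ₁ x = none)

/-- A context in which every declared channel has the terminated type `end`. -/
def Ctx.terminated (Γ : Ctx) : Prop := ∀ x T, Γ x = some T → T = SType.endT

/-- Vasconcelos' session typing judgement Γ ⊢_ST P. -/
inductive STyped : Ctx → SProc → Prop where
  | nil : Ctx.terminated Γ → STyped Γ .nil
  | par : Ctx.split Γ Γ₁ Γ₂ → STyped Γ₁ P → STyped Γ₂ Q → STyped Γ (.par P Q)
  | res (x y : Name) (T : SType) : Γ x = none → Γ y = none → x ≠ y →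
      STyped ((Γ.update x (some T)).update y (some T.dual)) P →
      STyped Γ (.res x y P)
  | input (x y : Name) (T S : SType) :
      Γ x = some (.recv T S) → y ≠ x → Γ y = none →
      STyped ((Γ.update x (some S)).update y (some T)) P →
      STyped Γ (.input x y P)
  | output (x v : Name) (T S : SType) :
      Γ x = some (.send T S) → v ≠ x → Γ v = some T →
      STyped ((Γ.update x (some S)).update v none) P →
      STyped Γ (.output x v P)
  | select (x : Name) (j : Label) (I : Finset Label) (S : Label → SType) :
      Γ x = some (.selectT I S) → j ∈ I →
      STyped (Γ.update x (some (S j))) P →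
      STyped Γ (.select x j P)
  | branch (x : Name) (I : Finset Label) (S : Label → SType) (Ps : Label → SProc) :
      Γ x = some (.branchT I S) →
      (∀ i ∈ I, STyped (Γ.update x (some (S i))) (Ps i)) →
      STyped Γ (.branch x I Ps)

/-! ## Well-formedness -/

/-- A sequence of double restrictions (ν x̃ỹ). -/
def resSeq : List (Name × Name) → SProc → SProc
  | [], P => P
  | (x, y) :: L, P => .res x y (resSeq L P)

inductive PrefixKind : Type where
  | inp | out | sel | bra

/-- The subject and kind of the topmost prefix of a process, if any. -/
def SProc.prefixKind : SProc → Option (Name × PrefixKind)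
  | .output x _ _ => some (x, .out)
  | .input x _ _ => some (x, .inp)
  | .select x _ _ => some (x, .sel)
  | .branch x _ _ => some (x, .bra)
  | _ => none

/-- Well-formedness for session processes (Definition of well-formed processes). -/
def WellFormed (Rp : SProc) : Prop :=
  ∀ (L : List (Name × Name)) (P Q : SProc), SC Rp (resSeq L (.par P Q)) →
    (∀ x kP kQ, P.prefixKind = some (x, kP) → Q.prefixKind = some (x, kQ) → kP = kQ) ∧
    (∀ x y kP kQ, (x, y) ∈ L →
      P.prefixKind = some (x, kP) → Q.prefixKind = some (y, kQ) →
      ∃ R', SRed (.par P Q) R')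

end Paper

namespace Paper

/-! ## Standard π-calculus with variant values -/

inductive Val : Type where
  | ch : Name → Val
  | variant : Label → Val → Val

def Val.fv : Val → Set Name
  | .ch x => {x}
  | .variant _ v => v.fv

/-- Substitution on values. -/
def Val.vsubst (v : Val) (z : Name) : Val → Val
  | .ch x => if x = z then v else .ch x
  | .variant l w => .variant l (Val.vsubst v z w)

/-- Substituting a value in subject (channel) position. -/
def Val.asSubject (v : Val) (z x : Name) : Name :=
  if x = z then (match v with | .ch a => a | _ => x) else x

inductive PProc : Type where
  | nil : PProc
  | output : Name → List Val → PProc → PProc       -- x̄⟨ṽ⟩.P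
  | input : Name → List Name → PProc → PProc       -- x(z̃).P
  | par : PProc → PProc → PProc
  | res : Name → PProc → PProc
  | pcase : Val → Finset Label → (Label → Name) → (Label → PProc) → PProc
      -- case v of {l_i(x_i) ▷ P_i}

namespace PProc

def fn : PProc → Set Name
  | nil => ∅
  | output x vs P => {x} ∪ (⋃ v ∈ vs, Val.fv v) ∪ P.fn
  | input x zs P => {x} ∪ (P.fn \ {a | a ∈ zs})
  | par P Q => P.fn ∪ Q.fn
  | res x P => P.fn \ {x}
  | pcase v I xs Ps => v.fv ∪ ⋃ i ∈ I, ((Ps i).fn \ {xs i})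

/-- Substitution `P[v/z]` of a value for a name. -/
def psubst (v : Val) (z : Name) : PProc → PProc
  | nil => nil
  | output x vs P => output (v.asSubject z x) (vs.map (Val.vsubst v z)) (P.psubst v z)
  | input x zs P => input (v.asSubject z x) zs (if z ∈ zs then P else P.psubst v z)
  | par P Q => par (P.psubst v z) (Q.psubst v z)
  | res a P => res a (if a = z then P else P.psubst v z)
  | pcase w I xs Ps =>
      pcase (Val.vsubst v z w) I xs (fun i => if xs i = z then Ps i else (Ps i).psubst v z)

/-- Simultaneous (here: iterated) substitution `P[ṽ/z̃]`. -/
def psubstList (zs : List Name) (vs : List Val) (P : PProc) : PProc :=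
  (zs.zip vs).foldl (fun acc p => acc.psubst p.2 p.1) P

end PProc

inductive PSC : PProc → PProc → Prop where
  | refl (P) : PSC P P
  | symm : PSC P Q → PSC Q P
  | trans : PSC P Q → PSC Q R → PSC P R
  | parComm (P Q) : PSC (.par P Q) (.par Q P)
  | parAssoc (P Q R) : PSC (.par (.par P Q) R) (.par P (.par Q R))
  | parNil (P) : PSC (.par P .nil) P
  | resPar (x : Name) (P Q) : x ∉ Q.fn → PSC (.par (.res x P) Q) (.res x (.par P Q))
  | resNil (x) : PSC (.res x .nil) .nil
  | resComm (x y P) : PSC (.res x (.res y P)) (.res y (.res x P))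
  | parCong : PSC P P' → PSC Q Q' → PSC (.par P Q) (.par P' Q')
  | resCong (x) : PSC P Q → PSC (.res x P) (.res x Q)

inductive PRed : PProc → PProc → Prop where
  | com (x : Name) (vs : List Val) (zs : List Name) (P Q) :
      vs.length = zs.length →
      PRed (.par (.output x vs P) (.input x zs Q)) (.par P (PProc.psubstList zs vs Q))
  | case (j : Label) (v : Val) (I : Finset Label) (xs : Label → Name) (Ps : Label → PProc) :
      j ∈ I →
      PRed (.pcase (.variant j v) I xs Ps) ((Ps j).psubst v (xs j))
  | par : PRed P Q → PRed (.par P R) (.par Q R)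
  | res (x) : PRed P Q → PRed (.res x P) (.res x Q)
  | str : PSC P P' → PRed P' Q' → PSC Q' Q → PRed P Q

/-! ## Usages and usage types (Kobayashi) -/

inductive Usage : Type where
  | empty : Usage
  | inp : ℕ → ℕ → Usage → Usage      -- ?ᵒ_κ.U
  | out : ℕ → ℕ → Usage → Usage      -- !ᵒ_κ.U
  | par : Usage → Usage → Usage

namespace Usage

/-- Structural congruence on usages. -/
inductive UCong : Usage → Usage → Prop where
  | refl (U) : UCong U U
  | symm : UCong U V → UCong V U
  | trans : UCong U V → UCong V W → UCong U W
  | comm (U V) : UCong (.par U V) (.par V U)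
  | assoc (U V W) : UCong (.par (.par U V) W) (.par U (.par V W))
  | unit (U) : UCong (.par U .empty) U
  | parCong : UCong U U' → UCong V V' → UCong (.par U V) (.par U' V')

/-- Usage reduction: a matched input/output pair is consumed. -/
inductive URed : Usage → Usage → Prop where
  | comm (o κ o' κ' : ℕ) (U₁ U₂) :
      URed (.par (.inp o κ U₁) (.out o' κ' U₂)) (.par U₁ U₂)
  | parL : URed U U' → URed (.par U V) (.par U' V)
  | str : UCong U U₁ → URed U₁ U₂ → UCong U₂ U' → URed U U'

/-- Input obligation level. -/
noncomputable def obIn : Usage → ℕ∞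
  | .empty => ⊤
  | .inp o _ _ => (o : ℕ∞)
  | .out _ _ _ => ⊤
  | .par U V => min U.obIn V.obIn

/-- Output obligation level. -/
noncomputable def obOut : Usage → ℕ∞
  | .empty => ⊤
  | .inp _ _ _ => ⊤
  | .out o _ _ => (o : ℕ∞)
  | .par U V => min U.obOut V.obOut

/-- Input capability level. -/
noncomputable def capIn : Usage → ℕ∞
  | .empty => ⊤
  | .inp _ κ _ => (κ : ℕ∞)
  | .out _ _ _ => ⊤
  | .par U V => min U.capIn V.capIn

/-- Output capability level. -/
noncomputable def capOut : Usage → ℕ∞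
  | .empty => ⊤
  | .inp _ _ _ => ⊤
  | .out _ κ _ => (κ : ℕ∞)
  | .par U V => min U.capOut V.capOut

/-- con(U): each capability is matched by a co-obligation of lower or equal level. -/
def con (U : Usage) : Prop := U.obOut ≤ U.capIn ∧ U.obIn ≤ U.capOut

/-- Reliability of a usage. -/
def rel (U : Usage) : Prop := ∀ U', Relation.ReflTransGen URed U U' → con U'

/-- Lifting the obligation levels of the topmost actions up to `t`. -/
def lift (t : ℕ) : Usage → Usage
  | .empty => .empty
  | .inp o κ U => .inp (max o t) κ U
  | .out o κ U => .out (max o t) κ U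
  | .par U V => .par (U.lift t) (V.lift t)

/-- A usage offering no behaviour at all. -/
def noUse : Usage → Prop
  | .empty => True
  | .par U V => U.noUse ∧ V.noUse
  | _ => False

end Usage

inductive UType : Type where
  | chan : Usage → List UType → UType            -- U[T̃]
  | variant : Finset Label → (Label → UType) → UType  -- ⟨l_i : T_i⟩

/-- Composition of usage types: (U₁|U₂)[T̃] from U₁[T̃] and U₂[T̃];
equal variant types compose to themselves. -/
inductive CompT : UType → UType → UType → Prop where
  | chan (U₁ U₂ : Usage) (Ts : List UType) :
      CompT (.chan U₁ Ts) (.chan U₂ Ts) (.chan (.par U₁ U₂) Ts)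
  | variant (I : Finset Label) (Ts : Label → UType) :
      CompT (.variant I Ts) (.variant I Ts) (.variant I Ts)

def UType.lift (t : ℕ) : UType → UType
  | .chan U Ts => .chan (U.lift t) Ts
  | .variant I Ts => .variant I Ts

abbrev UCtx := Name → Option UType

def UCtx.update (Γ : UCtx) (x : Name) (T : Option UType) : UCtx :=
  fun y => if y = x then T else Γ y

def UCtx.empty : UCtx := fun _ => none

/-- Context composition Γ = Γ₁ | Γ₂. -/
def CompC (Γ₁ Γ₂ Γ : UCtx) : Prop :=
  ∀ x, (Γ₁ x = none ∧ Γ₂ x = none ∧ Γ x = none) ∨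
       (∃ T, Γ₁ x = some T ∧ Γ₂ x = none ∧ Γ x = some T) ∨
       (∃ T, Γ₁ x = none ∧ Γ₂ x = some T ∧ Γ x = some T) ∨
       (∃ T₁ T₂ T, Γ₁ x = some T₁ ∧ Γ₂ x = some T₂ ∧ CompT T₁ T₂ T ∧ Γ x = some T)

def UCtx.lift (t : ℕ) (Γ : UCtx) : UCtx := fun x => (Γ x).map (UType.lift t)

/-- The usage of `x` in Γ (∅ if `x` is not a channel of Γ). -/
def UCtx.usageAt (Γ : UCtx) (x : Name) : Usage :=
  match Γ x with
  | some (.chan U _) => U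
  | _ => .empty

/-- The carried types of `x` in Γ, if declared, agree with `Ts`. -/
def UCtx.carriesOK (Γ : UCtx) (x : Name) (Ts : List UType) : Prop :=
  ∀ U Ts', Γ x = some (.chan U Ts') → Ts' = Ts

/-- The context x:αᵒ_κ[T̃] ; Γ. -/
def seqCtx (x : Name) (isInp : Bool) (o κ : ℕ) (Ts : List UType) (Γ : UCtx) : UCtx :=
  fun y =>
    if y = x then some (.chan ((if isInp then Usage.inp else Usage.out) o κ (Γ.usageAt x)) Ts)
    else (Γ y).map (UType.lift (κ + 1))

def UCtx.extendList (Γ : UCtx) (zs : List Name) (Ts : List UType) : UCtx :=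
  (zs.zip Ts).foldl (fun Δ p => Δ.update p.1 (some p.2)) Γ

/-- The set of channels shared by two contexts. -/
def UCtx.shared (Γ₁ Γ₂ : UCtx) : Set Name := {x | Γ₁ x ≠ none ∧ Γ₂ x ≠ none}

/-- Typing of values. -/
inductive VTyped : UCtx → Val → UType → Prop where
  | ch (x : Name) (T : UType) :
      Γ x = some T → (∀ y, y ≠ x → Γ y = none) → VTyped Γ (.ch x) T
  | variant (j : Label) (I : Finset Label) (Ts : Label → UType) :
      j ∈ I → VTyped Γ v (Ts j) → VTyped Γ (.variant j v) (.variant I Ts)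

inductive VTypedList : UCtx → List Val → List UType → Prop where
  | nil : (∀ x, Γ x = none) → VTypedList Γ [] []
  | cons : CompC Γ₁ Γ₂ Γ → VTyped Γ₁ v T → VTypedList Γ₂ vs Ts →
      VTypedList Γ (v :: vs) (T :: Ts)

/-- Kobayashi's usage typing Γ ⊢ⁿ_KB P, with the explicit degree of sharing `n`
in the rule for parallel composition. -/
inductive KBTyped (n : ℕ) : UCtx → PProc → Prop where
  | nil : (∀ x T, Γ x = some T → ∃ U Ts, T = UType.chan U Ts ∧ U.noUse) →
      KBTyped n Γ .nil
  | input (x : Name) (zs : List Name) (o κ : ℕ) (Ts : List UType) :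
      zs.Nodup → x ∉ zs → (∀ z ∈ zs, Γ z = none) → zs.length = Ts.length →
      Γ.carriesOK x Ts →
      KBTyped n (Γ.extendList zs Ts) P →
      KBTyped n (seqCtx x true o κ Ts Γ) (.input x zs P)
  | output (x : Name) (vs : List Val) (o κ : ℕ) (Ts : List UType) :
      VTypedList Γ₁ vs Ts → KBTyped n Γ₂ P → CompC Γ₁ Γ₂ Γ →
      Γ.carriesOK x Ts →
      KBTyped n (seqCtx x false o κ Ts Γ) (.output x vs P)
  | par : CompC Γ₁ Γ₂ Γ →
      (UCtx.shared Γ₁ Γ₂).Finite → (UCtx.shared Γ₁ Γ₂).ncard ≤ n →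
      KBTyped n Γ₁ P → KBTyped n Γ₂ Q →
      KBTyped n Γ (.par P Q)
  | res (x : Name) (U : Usage) (Ts : List UType) :
      Γ x = none → Usage.rel U →
      KBTyped n (Γ.update x (some (.chan U Ts))) P →
      KBTyped n Γ (.res x P)
  | pcase (v : Val) (I : Finset Label) (xs : Label → Name) (Ps : Label → PProc)
      (Ts : Label → UType) :
      VTyped Γ₁ v (.variant I Ts) → CompC Γ₁ Γ₂ Γ →
      (∀ i ∈ I, Γ₂ (xs i) = none) →
      (∀ i ∈ I, KBTyped n (Γ₂.update (xs i) (some (Ts i))) (Ps i)) →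
      KBTyped n Γ (.pcase v I xs Ps)

/-- Reduction of typing contexts: the usage of one channel reduces (or nothing happens). -/
inductive UCtxRed : UCtx → UCtx → Prop where
  | refl (Γ) : UCtxRed Γ Γ
  | step (x : Name) (U U' : Usage) (Ts : List UType) :
      Γ x = some (.chan U Ts) → Usage.URed U U' →
      UCtxRed Γ (Γ.update x (some (.chan U' Ts)))

/-! ## Deadlock freedom for the standard π-calculus -/

def resSeqP : List Name → PProc → PProc
  | [], P => P
  | x :: L, P => .res x (resSeqP L P)

/-- A communication on channel `x` is enabled at top level. -/
def CommEnabledOn (x : Name) (P : PProc) : Prop :=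
  ∃ (L : List Name) (vs : List Val) (zs : List Name) (Q R S : PProc),
    PSC P (resSeqP L (.par (.output x vs Q) (.par (.input x zs R) S)))

/-- The step from `P` to `P'` fires a communication on channel `x`. -/
def CommStepOn (x : Name) (P P' : PProc) : Prop :=
  ∃ (L : List Name) (vs : List Val) (zs : List Name) (Q R S : PProc),
    PSC P (resSeqP L (.par (.output x vs Q) (.par (.input x zs R) S))) ∧
    PSC P' (resSeqP L (.par Q (.par (PProc.psubstList zs vs R) S)))

/-- Maximal (possibly terminating, then stuttering) reduction sequences. -/
def PMaxSeq (s : ℕ → PProc) : Prop :=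
  ∀ i, PRed (s i) (s (i + 1)) ∨ (s (i + 1) = s i ∧ ∀ Q, ¬ PRed (s i) Q)

/-- Fairness: a communication that stays enabled forever is eventually performed. -/
def PFairSeq (s : ℕ → PProc) : Prop :=
  ∀ i x, (∀ j, i ≤ j → CommEnabledOn x (s j)) → ∃ j, i ≤ j ∧ CommStepOn x (s j) (s (j + 1))

/-- Deadlock freedom for the standard π-calculus (Kobayashi-style): every active
output or input prefix is eventually consumed, along any fair maximal reduction
sequence. -/
def PDeadlockFree (P₀ : PProc) : Prop :=
  ∀ s : ℕ → PProc, s 0 = P₀ → PMaxSeq s → PFairSeq s →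
    (∀ i (L : List Name) (x : Name) (vs : List Val) (Q R : PProc),
      PSC (s i) (resSeqP L (.par (.output x vs Q) R)) →
      ∃ k, i ≤ k ∧ ∃ (zs : List Name) (R₁ R₂ : PProc),
        PSC (s k) (resSeqP L (.par (.output x vs Q) (.par (.input x zs R₁) R₂))) ∧
        PSC (s (k + 1)) (resSeqP L (.par Q (.par (PProc.psubstList zs vs R₁) R₂)))) ∧
    (∀ i (L : List Name) (x : Name) (zs : List Name) (Q R : PProc),
      PSC (s i) (resSeqP L (.par (.input x zs Q) R)) →
      ∃ k, i ≤ k ∧ ∃ (vs : List Val) (R₁ R₂ : PProc),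
        PSC (s k) (resSeqP L (.par (.input x zs Q) (.par (.output x vs R₁) R₂))) ∧
        PSC (s (k + 1)) (resSeqP L (.par (PProc.psubstList zs vs Q) (.par R₁ R₂))))

end Paper

namespace Paper

/-! ## Deadlock freedom for the session π-calculus -/

/-- A session communication on the endpoint pair (x,y) is enabled. -/
def SCommEnabled (x y : Name) (P : SProc) : Prop :=
  (∃ (L : List (Name × Name)) (v z : Name) (Q R S : SProc),
    SC P (resSeq L (.par (.output x v Q) (.par (.input y z R) S))) ∧ (x, y) ∈ L) ∨
  (∃ (L : List (Name × Name)) (j : Label) (I : Finset Label) (Q S : SProc)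
     (Rs : Label → SProc),
    j ∈ I ∧ SC P (resSeq L (.par (.select x j Q) (.par (.branch y I Rs) S))) ∧ (x, y) ∈ L)

/-- The step from `P` to `P'` fires a session communication on (x,y). -/
def SCommStep (x y : Name) (P P' : SProc) : Prop :=
  (∃ (L : List (Name × Name)) (v z : Name) (Q R S : SProc),
    SC P (resSeq L (.par (.output x v Q) (.par (.input y z R) S))) ∧ (x, y) ∈ L ∧
    SC P' (resSeq L (.par Q (.par (R.subst v z) S)))) ∨
  (∃ (L : List (Name × Name)) (j : Label) (I : Finset Label) (Q S : SProc)
     (Rs : Label → SProc),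
    j ∈ I ∧ SC P (resSeq L (.par (.select x j Q) (.par (.branch y I Rs) S))) ∧ (x, y) ∈ L ∧
    SC P' (resSeq L (.par Q (.par (Rs j) S))))

def SMaxSeq (s : ℕ → SProc) : Prop :=
  ∀ i, SRed (s i) (s (i + 1)) ∨ (s (i + 1) = s i ∧ ∀ Q, ¬ SRed (s i) Q)

def SFairSeq (s : ℕ → SProc) : Prop :=
  ∀ i x y, (∀ j, i ≤ j → SCommEnabled x y (s j)) →
    ∃ j, i ≤ j ∧ SCommStep x y (s j) (s (j + 1))

/-- Deadlock freedom for the session π-calculus: every active output prefix and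
every active selection prefix is eventually consumed along any fair maximal
reduction sequence (the input/branching cases being symmetric). -/
def SDeadlockFree (P₀ : SProc) : Prop :=
  ∀ s : ℕ → SProc, s 0 = P₀ → SMaxSeq s → SFairSeq s →
    (∀ i (L : List (Name × Name)) (x v : Name) (Q R : SProc),
      SC (s i) (resSeq L (.par (.output x v Q) R)) →
      ∃ k, i ≤ k ∧ ∃ (L' : List (Name × Name)) (y z : Name) (R₁ R₂ : SProc),
        SC (s k) (resSeq L' (.par (.output x v Q) (.par (.input y z R₁) R₂))) ∧
        SC (s (k + 1)) (resSeq L' (.par Q (.par (R₁.subst v z) R₂)))) ∧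
    (∀ i (L : List (Name × Name)) (x : Name) (j : Label) (Q R : SProc),
      SC (s i) (resSeq L (.par (.select x j Q) R)) →
      ∃ k, i ≤ k ∧ ∃ (L' : List (Name × Name)) (y : Name) (I : Finset Label)
        (Rs : Label → SProc) (S : SProc),
        SC (s k) (resSeq L' (.par (.select x j Q) (.par (.branch y (insert j I) Rs) S))) ∧
        SC (s (k + 1)) (resSeq L' (.par Q (.par (Rs j) S))))

/-! ## Continuation-passing encoding of session processes into π-processes -/

/-- Updating the renaming function of the encoding: f, x ↦ c. -/
def fupd (f : Name → Name) (x c : Name) : Name → Name :=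
  fun y => if y = x then c else f y

/-- The continuation-passing style encoding ⟦·⟧_f of session processes into
standard π-calculus processes (Dardha et al.), as a relation (the fresh
continuation names are chosen nondeterministically). -/
inductive Enc : (Name → Name) → SProc → PProc → Prop where
  | nil (f) : Enc f .nil .nil
  | output (f) (x v c : Name) (P : SProc) (Q : PProc) :
      c ∉ f '' (SProc.fn (.output x v P)) → c ∉ SProc.fn (.output x v P) →
      Enc (fupd f x c) P Q →
      Enc f (.output x v P) (.res c (.output (f x) [.ch v, .ch c] Q))
  | input (f) (x y c : Name) (P : SProc) (Q : PProc) :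
      c ∉ f '' (SProc.fn (.input x y P)) → c ∉ SProc.fn (.input x y P) → c ≠ y →
      Enc (fupd f x c) P Q →
      Enc f (.input x y P) (.input (f x) [y, c] Q)
  | select (f) (x c : Name) (j : Label) (P : SProc) (Q : PProc) :
      c ∉ f '' (SProc.fn (.select x j P)) → c ∉ SProc.fn (.select x j P) →
      Enc (fupd f x c) P Q →
      Enc f (.select x j P) (.res c (.output (f x) [.variant j (.ch c)] Q))
  | branch (f) (x y c : Name) (I : Finset Label) (Ps : Label → SProc)
      (Qs : Label → PProc) :
      c ∉ f '' (SProc.fn (.branch x I Ps)) → c ∉ SProc.fn (.branch x I Ps) →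
      y ∉ f '' (SProc.fn (.branch x I Ps)) → y ≠ c →
      (∀ i ∈ I, Enc (fupd f x c) (Ps i) (Qs i)) →
      Enc f (.branch x I Ps) (.input (f x) [y] (.pcase (.ch y) I (fun _ => c) Qs))
  | res (f) (x y c : Name) (P : SProc) (Q : PProc) :
      c ∉ f '' (SProc.fn (.res x y P)) → c ∉ SProc.fn (.res x y P) →
      Enc (fupd (fupd f x c) y c) P Q →
      Enc f (.res x y P) (.res c Q)
  | par (f) (P₁ P₂ : SProc) (Q₁ Q₂ : PProc) :
      Enc f P₁ Q₁ → Enc f P₂ Q₂ →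
      Enc f (.par P₁ P₂) (.par Q₁ Q₂)

/-! ## Encoding of session types into usage types -/

mutual
/-- The encoding ⟦·⟧_su of session types into usage types (Dardha et al.),
with canonical obligation/capability annotations. -/
def encSU : SType → UType
  | .endT => .chan .empty []
  | .recv T S => .chan (.inp 0 0 .empty) [encSU T, encSU S]
  | .send T S => .chan (.out 0 0 .empty) [encSU T, encSUd S]
  | .branchT I S => .chan (.inp 0 0 .empty) [.variant I (fun i => encSU (S i))]
  | .selectT I S => .chan (.out 0 0 .empty) [.variant I (fun i => encSUd (S i))]

/-- `encSUd T` is ⟦T̄⟧_su, the encoding of the dual of `T`. -/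
def encSUd : SType → UType
  | .endT => .chan .empty []
  | .recv T S => .chan (.out 0 0 .empty) [encSU T, encSU S]
  | .send T S => .chan (.inp 0 0 .empty) [encSU T, encSUd S]
  | .branchT I S => .chan (.out 0 0 .empty) [.variant I (fun i => encSU (S i))]
  | .selectT I S => .chan (.inp 0 0 .empty) [.variant I (fun i => encSUd (S i))]
end

/-- Duality on usages: exchange ? and !. -/
def Usage.dualU : Usage → Usage
  | .empty => .empty
  | .inp o κ U => .out o κ U.dualU
  | .out o κ U => .inp o κ U.dualU
  | .par U V => .par U.dualU V.dualU

/-- Duality on usage types: exchange ? and ! in the top-level usage,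
leaving the carried types unchanged. -/
def UType.dual : UType → UType
  | .chan U Ts => .chan U.dualU Ts
  | .variant I Ts => .variant I Ts

/-- The top-level usage of a usage type. -/
def UType.topUsage : UType → Usage
  | .chan U _ => U
  | .variant _ _ => .empty

/-- Encoding ⟦Γ⟧_f of a session typing context into a usage typing context. -/
def EncCtx (f : Name → Name) (Γ : Ctx) (Δ : UCtx) : Prop :=
  (∀ x T, Γ x = some T → Δ (f x) = some (encSU T)) ∧
  (∀ y, (∀ x, Γ x ≠ none → f x ≠ y) → Δ y = none)

/-- The class K_n of deadlock-free session processes: session-typable processes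
whose encoding is typable in Kobayashi's system with degree of sharing n. -/
def Koba (n : ℕ) (P : SProc) : Prop :=
  ∃ (Γ : Ctx) (f : Name → Name) (Q : PProc) (Δ : UCtx),
    STyped Γ P ∧ Enc f P Q ∧ EncCtx f Γ Δ ∧ KBTyped n Δ Q

end Paper

namespace Paper

/-- The process P₂ = (νa₁b₁)(νa₂b₂)(a₁(x).ā₂⟨x⟩ | b̄₁⟨n⟩.b₂(z)), with
a₁ = 0, b₁ = 1, a₂ = 2, b₂ = 3, x = 4, n = 5, z = 6. -/
def Ptwo : SProc :=
  .res 0 1 (.res 2 3 (.par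
    (.input 0 4 (.output 2 4 .nil))
    (.output 1 5 (.input 3 6 .nil))))


/-! ## Auxiliary lemmas -/

theorem KBTyped_mono {m n : ℕ} (hmn : m ≤ n) {Γ : UCtx} {P : PProc}
    (h : KBTyped m Γ P) : KBTyped n Γ P := by
  induction h with
  | nil h => exact .nil h
  | input x zs o κ Ts h1 h2 h3 h4 h5 _ ih => exact .input x zs o κ Ts h1 h2 h3 h4 h5 ih
  | output x vs o κ Ts h1 _ h3 h4 ih => exact .output x vs o κ Ts h1 ih h3 h4
  | par hc hf hcard _ _ ih1 ih2 => exact .par hc hf (hcard.trans hmn) ih1 ih2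
  | res x U Ts h1 h2 _ ih => exact .res x U Ts h1 h2 ih
  | pcase v I xs Ps Ts h1 h2 h3 _ ih => exact .pcase v I xs Ps Ts h1 h2 h3 ih

/-- Multiset of topmost actions of a usage. -/
def Usage.acts : Usage → Multiset (Bool × ℕ × ℕ × Usage)
  | .empty => 0
  | .inp o κ U => {(true, o, κ, U)}
  | .out o κ U => {(false, o, κ, U)}
  | .par U V => U.acts + V.acts

theorem Usage.acts_cong {U V : Usage} (h : Usage.UCong U V) : U.acts = V.acts := by
  induction h with
  | refl => rfl
  | symm _ ih => exact ih.symm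
  | trans _ _ ih1 ih2 => exact ih1.trans ih2
  | comm U V => simp [Usage.acts, add_comm]
  | assoc U V W => simp [Usage.acts, add_assoc]
  | unit U => simp [Usage.acts]
  | parCong _ _ ih1 ih2 => simp [Usage.acts, ih1, ih2]

theorem Usage.red_acts {U V : Usage} (h : Usage.URed U V) :
    ∃ (o κ : ℕ) (U₁ : Usage) (o' κ' : ℕ) (U₂ : Usage) (R : Multiset (Bool × ℕ × ℕ × Usage)),
      U.acts = (true, o, κ, U₁) ::ₘ ((false, o', κ', U₂) ::ₘ R) ∧
      V.acts = U₁.acts + U₂.acts + R := by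
  induction h with
  | comm o κ o' κ' U₁ U₂ =>
      exact ⟨o, κ, U₁, o', κ', U₂, 0, by simp [Usage.acts], by simp [Usage.acts]⟩
  | @parL U U' W _ ih =>
      obtain ⟨o, κ, U₁, o', κ', U₂, R, h1, h2⟩ := ih
      refine ⟨o, κ, U₁, o', κ', U₂, R + W.acts, ?_, ?_⟩
      · simp [Usage.acts, h1]
      · simp [Usage.acts, h2, add_assoc]
  | str hc1 _ hc2 ih =>
      obtain ⟨o, κ, U₁, o', κ', U₂, R, h1, h2⟩ := ih
      exact ⟨o, κ, U₁, o', κ', U₂, R, (Usage.acts_cong hc1) ▸ h1,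
        (Usage.acts_cong hc2).symm ▸ h2⟩

def lvlObIn (a : Bool × ℕ × ℕ × Usage) : ℕ∞ := if a.1 then (a.2.1 : ℕ∞) else ⊤
def lvlObOut (a : Bool × ℕ × ℕ × Usage) : ℕ∞ := if a.1 then ⊤ else (a.2.1 : ℕ∞)
def lvlCapIn (a : Bool × ℕ × ℕ × Usage) : ℕ∞ := if a.1 then (a.2.2.1 : ℕ∞) else ⊤
def lvlCapOut (a : Bool × ℕ × ℕ × Usage) : ℕ∞ := if a.1 then ⊤ else (a.2.2.1 : ℕ∞)

theorem Usage.obIn_eq (U : Usage) : U.obIn = (U.acts.map lvlObIn).inf := by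
  induction U with
  | empty => simp [Usage.obIn, Usage.acts]
  | inp o κ U _ => simp [Usage.obIn, Usage.acts, lvlObIn]
  | out o κ U _ => simp [Usage.obIn, Usage.acts, lvlObIn]
  | par U V ih1 ih2 => simp [Usage.obIn, Usage.acts, ih1, ih2]

theorem Usage.obOut_eq (U : Usage) : U.obOut = (U.acts.map lvlObOut).inf := by
  induction U with
  | empty => simp [Usage.obOut, Usage.acts]
  | inp o κ U _ => simp [Usage.obOut, Usage.acts, lvlObOut]
  | out o κ U _ => simp [Usage.obOut, Usage.acts, lvlObOut]
  | par U V ih1 ih2 => simp [Usage.obOut, Usage.acts, ih1, ih2]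

theorem Usage.capIn_eq (U : Usage) : U.capIn = (U.acts.map lvlCapIn).inf := by
  induction U with
  | empty => simp [Usage.capIn, Usage.acts]
  | inp o κ U _ => simp [Usage.capIn, Usage.acts, lvlCapIn]
  | out o κ U _ => simp [Usage.capIn, Usage.acts, lvlCapIn]
  | par U V ih1 ih2 => simp [Usage.capIn, Usage.acts, ih1, ih2]

theorem Usage.capOut_eq (U : Usage) : U.capOut = (U.acts.map lvlCapOut).inf := by
  induction U with
  | empty => simp [Usage.capOut, Usage.acts]
  | inp o κ U _ => simp [Usage.capOut, Usage.acts, lvlCapOut]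
  | out o κ U _ => simp [Usage.capOut, Usage.acts, lvlCapOut]
  | par U V ih1 ih2 => simp [Usage.capOut, Usage.acts, ih1, ih2]

theorem con_of_acts_zero {V : Usage} (h : V.acts = 0) : Usage.con V := by
  constructor
  · rw [Usage.obOut_eq, Usage.capIn_eq, h]; simp
  · rw [Usage.obIn_eq, Usage.capOut_eq, h]; simp

theorem rel_of_acts_pair {oI κI oO κO : ℕ} (h1 : oO ≤ κI) (h2 : oI ≤ κO)
    {U : Usage}
    (hU : U.acts = (true, oI, κI, .empty) ::ₘ ((false, oO, κO, .empty) ::ₘ 0)) :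
    Usage.rel U := by
  set A : Multiset (Bool × ℕ × ℕ × Usage) :=
    (true, oI, κI, .empty) ::ₘ ((false, oO, κO, .empty) ::ₘ 0) with hA
  have key : ∀ V, Relation.ReflTransGen Usage.URed U V → V.acts = A ∨ V.acts = 0 := by
    intro V h
    induction h with
    | refl => exact Or.inl hU
    | tail _ hstep ih =>
        obtain ⟨o, κ, U₁, o', κ', U₂, R, hb, hc⟩ := Usage.red_acts hstep
        rcases ih with ih | ih
        · -- acts of middle = A; deduce R = 0, U₁ = U₂ = empty
          rw [ih] at hb
          have hcard : (2 : ℕ) = 2 + Multiset.card R := by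
            have := congrArg Multiset.card hb
            simpa [hA] using this
          have hR : R = 0 := by
            have : Multiset.card R = 0 := by omega
            exact Multiset.card_eq_zero.mp this
          subst hR
          have hmem : (true, o, κ, U₁) ∈ A := by rw [hb]; exact Multiset.mem_cons_self _ _
          have hU₁ : U₁ = .empty := by
            rcases Multiset.mem_cons.mp hmem with h | h
            · exact congrArg (fun a => a.2.2.2) h
            · simp at h
          have hmem2 : (false, o', κ', U₂) ∈ A := by
            rw [hb]; exact Multiset.mem_cons_of_mem (Multiset.mem_cons_self _ _)
          have hU₂ : U₂ = .empty := by
            rcases Multiset.mem_cons.mp hmem2 with h | h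
            · simp at h
            · rcases Multiset.mem_cons.mp h with h | h
              · exact congrArg (fun a => a.2.2.2) h
              · simp at h
          right
          rw [hc, hU₁, hU₂]
          simp [Usage.acts]
        · rw [ih] at hb
          exact absurd hb.symm (Multiset.cons_ne_zero)
  intro V hV
  rcases key V hV with h | h
  · constructor
    · rw [Usage.obOut_eq, Usage.capIn_eq, h, hA]
      simp [lvlObOut, lvlCapIn]
      exact_mod_cast h1
    · rw [Usage.obIn_eq, Usage.capOut_eq, h, hA]
      simp [lvlObIn, lvlCapOut]
      exact_mod_cast h2
  · exact con_of_acts_zero h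

theorem rel_empty : Usage.rel .empty := by
  have key : ∀ V, Relation.ReflTransGen Usage.URed .empty V → V.acts = 0 := by
    intro V h
    induction h with
    | refl => rfl
    | tail _ hstep ih =>
        obtain ⟨o, κ, U₁, o', κ', U₂, R, hb, _⟩ := Usage.red_acts hstep
        rw [ih] at hb
        exact absurd hb.symm (Multiset.cons_ne_zero)
  intro V hV
  exact con_of_acts_zero (key V hV)


theorem compC_none_left {A B C : UCtx} (h : CompC A B C) {x : Name}
    (hx : A x = none) : C x = B x := by
  rcases h x with ⟨_, h2, h3⟩ | ⟨T, h1, _, _⟩ | ⟨T, _, h2, h3⟩ | ⟨T₁, _, _, h1, _⟩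
  · rw [h2, h3]
  · rw [hx] at h1; exact absurd h1 (by simp)
  · rw [h2, h3]
  · rw [hx] at h1; exact absurd h1 (by simp)

theorem compC_right_ne_none {A B C : UCtx} (h : CompC A B C) {x : Name}
    (hx : B x ≠ none) : C x ≠ none := by
  rcases h x with ⟨h1, h2, h3⟩ | ⟨T, _, h2, _⟩ | ⟨T, _, _, h3⟩ | ⟨T₁, T₂, T, _, _, _, h3⟩
  · exact absurd h2 hx
  · exact absurd h2 hx
  · rw [h3]; simp
  · rw [h3]; simp

theorem extendList_not_mem {Γ : UCtx} {zs : List Name} {Ts : List UType} {x : Name}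
    (hx : x ∉ zs) : Γ.extendList zs Ts x = Γ x := by
  induction zs generalizing Γ Ts with
  | nil => rfl
  | cons z zs ih =>
      cases Ts with
      | nil => rfl
      | cons T Ts =>
          have hxz : x ≠ z := fun h => hx (h ▸ List.mem_cons_self (a := z) (l := zs))
          have hxzs : x ∉ zs := fun h => hx (List.mem_cons_of_mem _ h)
          show UCtx.extendList (Γ.update z (some T)) zs Ts x = Γ x
          rw [ih hxzs]
          simp [UCtx.update, hxz]


/-! ## Membership of P₂ in K₂ : explicit witnesses -/

def Te : UType := .chan .empty []
def TsC : List UType := [Te, Te]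
def GsS : Ctx := fun y => if y = 5 then some .endT else none
def DeltaS : UCtx := fun y => if y = 5 then some Te else none
def GA : Ctx := fun y =>
  if y = 0 then some (.recv .endT .endT) else if y = 2 then some (.send .endT .endT) else none
def GB : Ctx := fun y =>
  if y = 1 then some (.send .endT .endT) else if y = 3 then some (.recv .endT .endT)
  else if y = 5 then some .endT else none
def G1' : UCtx := fun y => if y = 8 then some (.chan (.out 0 1 .empty) TsC) else none
def G1 : UCtx := seqCtx 7 true 0 0 TsC G1'
def G2 : UCtx := fun y =>
  if y = 7 then some (.chan (.out 0 0 .empty) TsC)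
  else if y = 8 then some (.chan (.inp 1 1 .empty) TsC)
  else if y = 5 then some Te else none
def U7 : Usage := .par (.inp 0 0 .empty) (.out 0 0 .empty)
def U8 : Usage := .par (.out 1 1 .empty) (.inp 1 1 .empty)
def G4 : UCtx := fun y =>
  if y = 4 then some Te else if y = 9 then some Te else if y = 10 then some Te else none
def Ga : UCtx := fun y => if y = 4 then some Te else if y = 10 then some Te else none
def Gb : UCtx := fun y => if y = 9 then some Te else none
def G7 : UCtx := fun y =>
  if y = 8 then some (.chan (.inp 0 1 .empty) TsC)
  else if y = 5 then some Te else if y = 11 then some Te else none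
def Gc : UCtx := fun y => if y = 5 then some Te else if y = 11 then some Te else none
def Gd : UCtx := seqCtx 8 true 0 1 TsC UCtx.empty

/-- Singleton usage context. -/
def oneU (x : Name) (T : UType) : UCtx := fun y => if y = x then some T else none

theorem vtyped_one (x : Name) (T : UType) : VTyped (oneU x T) (.ch x) T := by
  refine VTyped.ch x T (by simp [oneU]) ?_
  intro y hy; simp [oneU, hy]

theorem rel_U7 : Usage.rel U7 := by
  refine rel_of_acts_pair (oI := 0) (κI := 0) (oO := 0) (κO := 0) le_rfl le_rfl ?_
  rfl

theorem rel_U8 : Usage.rel U8 := by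
  refine rel_of_acts_pair (oI := 1) (κI := 1) (oO := 1) (κO := 1) le_rfl le_rfl ?_
  have h : U8.acts = (false, 1, 1, Usage.empty) ::ₘ (true, 1, 1, Usage.empty) ::ₘ 0 := rfl
  rw [h]
  exact Multiset.cons_swap _ _ _

theorem styped_Ptwo : STyped GsS Ptwo := by
  refine STyped.res 0 1 (.recv .endT .endT) (by simp [GsS]) (by simp [GsS]) (by decide) ?_
  refine STyped.res 2 3 (.send .endT .endT) (by simp [GsS, Ctx.update])
    (by simp [GsS, Ctx.update]) (by decide) ?_
  refine STyped.par (Γ₁ := GA) (Γ₂ := GB) ?_ ?_ ?_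
  · intro x
    by_cases h0 : x = 0
    · subst h0; left; constructor <;> simp [GA, GB, Ctx.update, SType.dual]
    by_cases h1 : x = 1
    · subst h1; right; constructor <;> simp [GA, GB, Ctx.update, SType.dual]
    by_cases h2 : x = 2
    · subst h2; left; constructor <;> simp [GA, GB, Ctx.update, SType.dual]
    by_cases h3 : x = 3
    · subst h3; right; constructor <;> simp [GA, GB, Ctx.update, SType.dual]
    by_cases h5 : x = 5
    · subst h5; right; constructor <;> simp [GA, GB, GsS, Ctx.update]
    · left; constructor <;> simp [GA, GB, GsS, Ctx.update, h0, h1, h2, h3, h5]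
  · refine STyped.input 0 4 .endT .endT (by simp [GA]) (by decide) (by simp [GA]) ?_
    refine STyped.output 2 4 .endT .endT (by simp [GA, Ctx.update]) (by decide)
      (by simp [Ctx.update]) ?_
    refine STyped.nil ?_
    intro x T hx
    simp only [Ctx.update, GA] at hx
    split_ifs at hx <;> simp_all
  · refine STyped.output 1 5 .endT .endT (by simp [GB]) (by decide) (by simp [GB]) ?_
    refine STyped.input 3 6 .endT .endT (by simp [GB, Ctx.update]) (by decide)
      (by simp [GB, Ctx.update]) ?_
    refine STyped.nil ?_
    intro x T hx
    simp only [Ctx.update, GB] at hx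
    split_ifs at hx <;> simp_all

def Qtwo : PProc :=
  .res 7 (.res 8 (.par
    (.input 7 [4, 9] (.res 10 (.output 8 [.ch 4, .ch 10] .nil)))
    (.res 11 (.output 7 [.ch 5, .ch 11] (.input 8 [6, 12] .nil)))))

theorem enc_Ptwo : Enc id Ptwo Qtwo := by
  refine Enc.res id 0 1 7 _ _ (by simp [SProc.fn]) (by simp [SProc.fn]) ?_
  refine Enc.res _ 2 3 8 _ _ (by simp [SProc.fn, fupd]) (by simp [SProc.fn]) ?_
  refine Enc.par _ _ _ _ _ ?_ ?_
  · refine Enc.input _ 0 4 9 _ _ (by simp [SProc.fn, fupd]) (by simp [SProc.fn])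
      (by decide) ?_
    refine Enc.output _ 2 4 10 _ _ (by simp [SProc.fn, fupd]) (by simp [SProc.fn]) ?_
    exact Enc.nil _
  · refine Enc.output _ 1 5 11 _ _ (by simp [SProc.fn, fupd]) (by simp [SProc.fn]) ?_
    refine Enc.input _ 3 6 12 _ _ (by simp [SProc.fn, fupd]) (by simp [SProc.fn])
      (by decide) ?_
    exact Enc.nil _

theorem encCtx_Ptwo : EncCtx id GsS DeltaS := by
  constructor
  · intro x T hx
    by_cases h5 : x = 5
    · subst h5
      simp [GsS] at hx
      subst hx
      simp [DeltaS, Te, encSU]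
    · simp [GsS, h5] at hx
  · intro y hy
    by_cases h5 : y = 5
    · subst h5
      exact absurd rfl (hy 5 (by simp [GsS]))
    · simp [DeltaS, h5]

theorem kb_Qtwo : KBTyped 2 DeltaS Qtwo := by
  refine KBTyped.res 7 U7 TsC (by simp [DeltaS]) rel_U7 ?_
  refine KBTyped.res 8 U8 TsC (by simp [DeltaS, UCtx.update]) rel_U8 ?_
  refine KBTyped.par (Γ₁ := G1) (Γ₂ := G2) ?_ ?_ ?_ ?_ ?_
  · -- CompC G1 G2 Δb
    intro x
    by_cases h7 : x = 7
    · subst h7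
      refine Or.inr (Or.inr (Or.inr ⟨.chan (.inp 0 0 .empty) TsC, .chan (.out 0 0 .empty) TsC,
        .chan U7 TsC, ?_, ?_, ?_, ?_⟩))
      · simp [G1, seqCtx, G1', UCtx.usageAt]
      · simp [G2]
      · exact CompT.chan _ _ _
      · simp [UCtx.update]
    by_cases h8 : x = 8
    · subst h8
      refine Or.inr (Or.inr (Or.inr ⟨.chan (.out 1 1 .empty) TsC, .chan (.inp 1 1 .empty) TsC,
        .chan U8 TsC, ?_, ?_, ?_, ?_⟩))
      · simp [G1, seqCtx, G1', UType.lift, Usage.lift]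
      · simp [G2]
      · exact CompT.chan _ _ _
      · simp [UCtx.update]
    by_cases h5 : x = 5
    · subst h5
      refine Or.inr (Or.inr (Or.inl ⟨Te, ?_, ?_, ?_⟩))
      · simp [G1, seqCtx, G1']
      · simp [G2]
      · simp [UCtx.update, DeltaS]
    · refine Or.inl ⟨?_, ?_, ?_⟩
      · simp [G1, seqCtx, G1', h7, h8]
      · simp [G2, h7, h8, h5]
      · simp [UCtx.update, DeltaS, h7, h8, h5]
  · -- finiteness of shared
    refine Set.Finite.subset ((Set.finite_singleton 8).insert 7) ?_
    intro x hx
    obtain ⟨hx1, _⟩ := hx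
    by_contra h
    simp only [Set.mem_insert_iff, Set.mem_singleton_iff, not_or] at h
    exact hx1 (by simp [G1, seqCtx, G1', h.1, h.2])
  · -- ncard ≤ 2
    have hsub : UCtx.shared G1 G2 ⊆ ({7, 8} : Set Name) := by
      intro x hx
      obtain ⟨hx1, _⟩ := hx
      by_contra h
      simp only [Set.mem_insert_iff, Set.mem_singleton_iff, not_or] at h
      exact hx1 (by simp [G1, seqCtx, G1', h.1, h.2])
    calc (UCtx.shared G1 G2).ncard ≤ ({7, 8} : Set Name).ncard :=
          Set.ncard_le_ncard hsub ((Set.finite_singleton 8).insert 7)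
      _ = 2 := Set.ncard_pair (by decide)
  · -- Q1
    refine KBTyped.input 7 [4, 9] 0 0 TsC (by decide) (by decide) ?_ rfl ?_ ?_
    · intro z hz
      simp at hz
      rcases hz with rfl | rfl <;> simp [G1']
    · intro U Ts h; simp [G1'] at h
    · show KBTyped 2 ((G1'.update 4 (some Te)).update 9 (some Te)) _
      refine KBTyped.res 10 .empty [] (by simp [UCtx.update, G1']) rel_empty ?_
      have hC2 : (((G1'.update 4 (some Te)).update 9 (some Te)).update 10
          (some (.chan .empty []))) = seqCtx 8 false 0 1 TsC G4 := by
        funext y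
        by_cases h4 : y = 4
        · subst h4; simp [UCtx.update, G1', seqCtx, G4, Te, UType.lift, Usage.lift]
        by_cases h9 : y = 9
        · subst h9; simp [UCtx.update, G1', seqCtx, G4, Te, UType.lift, Usage.lift]
        by_cases h10 : y = 10
        · subst h10; simp [UCtx.update, G1', seqCtx, G4, Te, UType.lift, Usage.lift]
        by_cases h8 : y = 8
        · subst h8; simp [UCtx.update, G1', seqCtx, G4, UCtx.usageAt]
        · simp [UCtx.update, G1', seqCtx, G4, h4, h9, h10, h8]
      rw [hC2]
      refine KBTyped.output 8 [.ch 4, .ch 10] 0 1 TsC (Γ₁ := Ga) (Γ₂ := Gb) ?_ ?_ ?_ ?_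
      · -- VTypedList Ga [ch 4, ch 10] TsC
        refine VTypedList.cons (Γ₁ := oneU 4 Te) (Γ₂ := oneU 10 Te) ?_ (vtyped_one 4 Te) ?_
        · intro x
          by_cases h4 : x = 4
          · subst h4; exact Or.inr (Or.inl ⟨Te, by simp [oneU], by simp [oneU], by simp [Ga]⟩)
          by_cases h10 : x = 10
          · subst h10
            exact Or.inr (Or.inr (Or.inl ⟨Te, by simp [oneU], by simp [oneU], by simp [Ga]⟩))
          · exact Or.inl ⟨by simp [oneU, h4], by simp [oneU, h10], by simp [Ga, h4, h10]⟩
        · refine VTypedList.cons (Γ₁ := oneU 10 Te) (Γ₂ := UCtx.empty) ?_ (vtyped_one 10 Te)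
            (VTypedList.nil (fun x => rfl))
          intro x
          by_cases h10 : x = 10
          · subst h10
            exact Or.inr (Or.inl ⟨Te, by simp [oneU], rfl, by simp [oneU]⟩)
          · exact Or.inl ⟨by simp [oneU, h10], rfl, by simp [oneU, h10]⟩
      · -- KBTyped Gb nil
        refine KBTyped.nil ?_
        intro x T h
        by_cases h9 : x = 9
        · subst h9
          simp [Gb] at h
          exact ⟨.empty, [], h.symm, trivial⟩
        · simp [Gb, h9] at h
      · -- CompC Ga Gb G4
        intro x
        by_cases h4 : x = 4
        · subst h4; exact Or.inr (Or.inl ⟨Te, by simp [Ga], by simp [Gb], by simp [G4]⟩)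
        by_cases h10 : x = 10
        · subst h10; exact Or.inr (Or.inl ⟨Te, by simp [Ga], by simp [Gb], by simp [G4]⟩)
        by_cases h9 : x = 9
        · subst h9; exact Or.inr (Or.inr (Or.inl ⟨Te, by simp [Ga], by simp [Gb], by simp [G4]⟩))
        · exact Or.inl ⟨by simp [Ga, h4, h10], by simp [Gb, h9], by simp [G4, h4, h10, h9]⟩
      · intro U Ts h; simp [G4] at h
  · -- Q2
    refine KBTyped.res 11 .empty [] (by simp [G2]) rel_empty ?_
    have hD1 : G2.update 11 (some (.chan .empty [])) = seqCtx 7 false 0 0 TsC G7 := by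
      funext y
      by_cases h7 : y = 7
      · subst h7; simp [UCtx.update, G2, seqCtx, G7, UCtx.usageAt]
      by_cases h8 : y = 8
      · subst h8; simp [UCtx.update, G2, seqCtx, G7, UType.lift, Usage.lift]
      by_cases h5 : y = 5
      · subst h5; simp [UCtx.update, G2, seqCtx, G7, Te, UType.lift, Usage.lift]
      by_cases h11 : y = 11
      · subst h11; simp [UCtx.update, G2, seqCtx, G7, Te, UType.lift, Usage.lift]
      · simp [UCtx.update, G2, seqCtx, G7, h7, h8, h5, h11]
    rw [hD1]
    refine KBTyped.output 7 [.ch 5, .ch 11] 0 0 TsC (Γ₁ := Gc) (Γ₂ := Gd) ?_ ?_ ?_ ?_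
    · refine VTypedList.cons (Γ₁ := oneU 5 Te) (Γ₂ := oneU 11 Te) ?_ (vtyped_one 5 Te) ?_
      · intro x
        by_cases h5 : x = 5
        · subst h5; exact Or.inr (Or.inl ⟨Te, by simp [oneU], by simp [oneU], by simp [Gc]⟩)
        by_cases h11 : x = 11
        · subst h11
          exact Or.inr (Or.inr (Or.inl ⟨Te, by simp [oneU], by simp [oneU], by simp [Gc]⟩))
        · exact Or.inl ⟨by simp [oneU, h5], by simp [oneU, h11], by simp [Gc, h5, h11]⟩
      · refine VTypedList.cons (Γ₁ := oneU 11 Te) (Γ₂ := UCtx.empty) ?_ (vtyped_one 11 Te)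
          (VTypedList.nil (fun x => rfl))
        intro x
        by_cases h11 : x = 11
        · subst h11; exact Or.inr (Or.inl ⟨Te, by simp [oneU], rfl, by simp [oneU]⟩)
        · exact Or.inl ⟨by simp [oneU, h11], rfl, by simp [oneU, h11]⟩
    · -- KBTyped Gd (input 8 [6,12] nil)
      refine KBTyped.input 8 [6, 12] 0 1 TsC (by decide) (by decide) (fun z _ => rfl) rfl
        (fun U Ts h => by simp [UCtx.empty] at h) ?_
      show KBTyped 2 ((UCtx.empty.update 6 (some Te)).update 12 (some Te)) _
      refine KBTyped.nil ?_
      intro x T h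
      by_cases h12 : x = 12
      · subst h12
        simp [UCtx.update] at h
        exact ⟨.empty, [], h.symm, trivial⟩
      by_cases h6 : x = 6
      · subst h6
        simp [UCtx.update, h12] at h
        exact ⟨.empty, [], h.symm, trivial⟩
      · simp [UCtx.update, UCtx.empty, h12, h6] at h
    · -- CompC Gc Gd G7
      intro x
      by_cases h5 : x = 5
      · subst h5
        exact Or.inr (Or.inl ⟨Te, by simp [Gc], by simp [Gd, seqCtx, UCtx.empty], by simp [G7]⟩)
      by_cases h11 : x = 11
      · subst h11
        exact Or.inr (Or.inl ⟨Te, by simp [Gc], by simp [Gd, seqCtx, UCtx.empty], by simp [G7]⟩)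
      by_cases h8 : x = 8
      · subst h8
        refine Or.inr (Or.inr (Or.inl ⟨.chan (.inp 0 1 .empty) TsC, by simp [Gc], ?_, by simp [G7]⟩))
        simp [Gd, seqCtx, UCtx.empty, UCtx.usageAt]
      · exact Or.inl ⟨by simp [Gc, h5, h11], by simp [Gd, seqCtx, UCtx.empty, h8],
          by simp [G7, h5, h11, h8]⟩
    · intro U Ts h; simp [G7] at h

theorem koba2_Ptwo : Koba 2 Ptwo :=
  ⟨GsS, id, Qtwo, DeltaS, styped_Ptwo, enc_Ptwo, encCtx_Ptwo, kb_Qtwo⟩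


/-! ## P₂ is not in K₁ -/

theorem kb_res_inv {n : ℕ} {Γ : UCtx} {x : Name} {P : PProc}
    (h : KBTyped n Γ (.res x P)) :
    ∃ (U : Usage) (Ts : List UType), Γ x = none ∧ Usage.rel U ∧
      KBTyped n (Γ.update x (some (.chan U Ts))) P := by
  cases h
  exact ⟨_, _, ‹_›, ‹_›, ‹_›⟩

theorem kb_par_inv {n : ℕ} {Γ : UCtx} {P Q : PProc}
    (h : KBTyped n Γ (.par P Q)) :
    ∃ (Γ₁ Γ₂ : UCtx), CompC Γ₁ Γ₂ Γ ∧ (UCtx.shared Γ₁ Γ₂).Finite ∧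
      (UCtx.shared Γ₁ Γ₂).ncard ≤ n ∧ KBTyped n Γ₁ P ∧ KBTyped n Γ₂ Q := by
  cases h
  exact ⟨_, _, ‹_›, ‹_›, ‹_›, ‹_›, ‹_›⟩

theorem kb_input_inv {n : ℕ} {Γ : UCtx} {x : Name} {zs : List Name} {P : PProc}
    (h : KBTyped n Γ (.input x zs P)) :
    ∃ (Γ' : UCtx) (o κ : ℕ) (Ts : List UType),
      Γ = seqCtx x true o κ Ts Γ' ∧ zs.Nodup ∧ x ∉ zs ∧ (∀ z ∈ zs, Γ' z = none) ∧
      zs.length = Ts.length ∧ KBTyped n (Γ'.extendList zs Ts) P := by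
  cases h
  exact ⟨_, _, _, _, rfl, ‹_›, ‹_›, ‹_›, ‹_›, ‹_›⟩

theorem kb_output_inv {n : ℕ} {Γ : UCtx} {x : Name} {vs : List Val} {P : PProc}
    (h : KBTyped n Γ (.output x vs P)) :
    ∃ (Γa Γb Γc : UCtx) (o κ : ℕ) (Ts : List UType),
      Γ = seqCtx x false o κ Ts Γc ∧ VTypedList Γa vs Ts ∧ KBTyped n Γb P ∧
      CompC Γa Γb Γc := by
  cases h
  exact ⟨_, _, _, _, _, _, rfl, ‹_›, ‹_›, ‹_›⟩

theorem vtl_cons_inv {Γ : UCtx} {v : Val} {vs : List Val} {Ts : List UType}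
    (h : VTypedList Γ (v :: vs) Ts) :
    ∃ (Γ₁ Γ₂ : UCtx) (T : UType) (Ts' : List UType),
      Ts = T :: Ts' ∧ CompC Γ₁ Γ₂ Γ ∧ VTyped Γ₁ v T ∧ VTypedList Γ₂ vs Ts' := by
  cases h
  exact ⟨_, _, _, _, rfl, ‹_›, ‹_›, ‹_›⟩

theorem vtl_nil_inv {Γ : UCtx} {Ts : List UType} (h : VTypedList Γ [] Ts) :
    ∀ x, Γ x = none := by
  cases h
  assumption

theorem vtyped_ch_inv {Γ : UCtx} {x : Name} {T : UType} (h : VTyped Γ (.ch x) T) :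
    Γ x = some T ∧ ∀ y, y ≠ x → Γ y = none := by
  cases h
  exact ⟨‹_›, ‹_›⟩

theorem not_koba1_Ptwo : ¬ Koba 1 Ptwo := by
  rintro ⟨Γ, f, Q, Δ, hST, hEnc, hCtx, hKB⟩
  unfold Ptwo at hEnc
  cases hEnc with
  | res _ _ _ c1 _ _ him1 hfn1 hE1 =>
  cases hE1 with
  | res _ _ _ c2 _ _ him2 hfn2 hE2 =>
  cases hE2 with
  | par _ _ _ _ _ hEA hEB =>
  cases hEA with
  | input _ _ _ c _ _ himc hfnc hc4 hEAo =>
  cases hEAo with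
  | output _ _ _ d _ _ himd hfnd hEAn =>
  cases hEAn
  cases hEB with
  | output _ _ _ e _ _ hime hfne hEBi =>
  cases hEBi with
  | input _ _ _ c' _ _ himc' hfnc' hc'6 hEBn =>
  cases hEBn
  -- reduce the continuation-function applications to concrete names
  simp only [fupd] at hKB
  norm_num at hKB
  -- name inequalities from freshness
  have h0fn2 : (0 : ℕ) ∈ SProc.fn (.res 2 3 (.par
      (.input 0 4 (.output 2 4 .nil)) (.output 1 5 (.input 3 6 .nil)))) := by
    simp [SProc.fn]
  have hne21 : c2 ≠ c1 := by
    intro h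
    exact him2 ⟨0, h0fn2, by simp [fupd, h]⟩
  have hinfn : (0 : ℕ) ∈ SProc.fn (.input 0 4 (.output 2 4 .nil)) := by simp [SProc.fn]
  have hinfn2 : (2 : ℕ) ∈ SProc.fn (.input 0 4 (.output 2 4 .nil)) := by simp [SProc.fn]
  have hcc1 : c ≠ c1 := by
    intro h
    exact himc ⟨0, hinfn, by simp [fupd, h]⟩
  have hcc2 : c ≠ c2 := by
    intro h
    exact himc ⟨2, hinfn2, by simp [fupd, h]⟩
  have hdc2 : d ≠ c2 := by
    intro h
    exact himd ⟨2, by simp [SProc.fn], by simp [fupd, h]⟩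
  have hec1 : e ≠ c1 := by
    intro h
    exact hime ⟨1, by simp [SProc.fn], by simp [fupd, h]⟩
  have hec2 : e ≠ c2 := by
    intro h
    exact hime ⟨3, by simp [SProc.fn], by simp [fupd, h]⟩
  -- invert the usage typing: two restrictions then parallel composition
  obtain ⟨U1, Ts1, hΔ1, hrel1, hKB1⟩ := kb_res_inv hKB
  obtain ⟨U2, Ts2, hΔ2, hrel2, hKB2⟩ := kb_res_inv hKB1
  obtain ⟨Γ₁, Γ₂, hcomp, hfin, hcard, hK1, hK2⟩ := kb_par_inv hKB2
  obtain ⟨Γ', o, κ, Ts, hΓ₁, hnodup, hxzs, hznone, hlen, hcont⟩ := kb_input_inv hK1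
  by_cases h14 : c1 = 4
  · exact hxzs (by simp [h14])
  -- invert the typing of the right component
  obtain ⟨Ue, Tse, hΓ₂e, hrelE, hK2'⟩ := kb_res_inv hK2
  obtain ⟨Γc, Γd, Γ7, o3, κ3, TsB, hCtxEq, hVL, hK2'', hcomp2⟩ := kb_output_inv hK2'
  obtain ⟨Γe, o4, κ4, Ts4, hΓd, _, _, _, _, _⟩ := kb_input_inv hK2''
  have hΓdc2 : Γd c2 = some (.chan (.inp o4 κ4 (Γe.usageAt c2)) Ts4) := by
    rw [hΓd]; simp [seqCtx]
  by_cases h24 : c2 = 4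
  · -- the restricted channel c2 = 4 would carry an unmatched input capability
    subst h24
    -- the left context does not use channel 4
    have hΓ₁4 : Γ₁ 4 = none := by
      rw [hΓ₁]
      simp only [seqCtx]
      rw [if_neg (fun h : (4 : Name) = c1 => h14 h.symm)]
      rw [hznone 4 (by simp)]
      rfl
    -- the value context of the output does not use channel 4
    obtain ⟨Γc1, Γc2, T5, Ts5, _, hcompc, hV5, hVL2⟩ := vtl_cons_inv hVL
    obtain ⟨Γa, Γb, Te', Ts6, _, hcompa, hVe, hVL3⟩ := vtl_cons_inv hVL2
    have hΓc4 : Γc 4 = none := by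
      have h1 : Γc1 4 = none := (vtyped_ch_inv hV5).2 4 (by decide)
      have h2 : Γa 4 = none := (vtyped_ch_inv hVe).2 4 (Ne.symm hec2)
      have h3 : Γc2 4 = none := by
        rw [compC_none_left hcompa h2]; exact vtl_nil_inv hVL3 4
      rw [compC_none_left hcompc h1]; exact h3
    have hΓ74 : Γ7 4 = Γd 4 := compC_none_left hcomp2 hΓc4
    -- compute Γ₂ 4
    have hq := congrFun hCtxEq 4
    rw [UCtx.update] at hq
    rw [if_neg (Ne.symm hec2)] at hq
    rw [show (seqCtx c1 false o3 κ3 TsB Γ7) 4 =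
        Option.map (UType.lift (κ3 + 1)) (Γ7 4) by
      simp only [seqCtx]
      rw [if_neg (fun h : (4 : Name) = c1 => h14 h.symm)]] at hq
    rw [hΓ74, hΓdc2] at hq
    -- the composed context at 4
    have htop : UCtx.update (UCtx.update Δ c1 (some (.chan U1 Ts1))) 4
        (some (.chan U2 Ts2)) 4 = Γ₂ 4 := compC_none_left hcomp hΓ₁4
    rw [UCtx.update, if_pos rfl] at htop
    rw [hq] at htop
    rw [show Option.map (UType.lift (κ3 + 1))
        (some (UType.chan (Usage.inp o4 κ4 (Γe.usageAt 4)) Ts4)) =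
        some (UType.chan (Usage.inp (max o4 (κ3 + 1)) κ4 (Γe.usageAt 4)) Ts4)
      from rfl] at htop
    have hU2 : U2 = .inp (max o4 (κ3 + 1)) κ4 (Γe.usageAt 4) := by
      simp only [Option.some.injEq, UType.chan.injEq] at htop
      exact htop.1
    have hcon := hrel2 U2 Relation.ReflTransGen.refl
    obtain ⟨hA, _⟩ := hcon
    rw [hU2] at hA
    simp only [Usage.obOut, Usage.capIn] at hA
    rw [top_le_iff] at hA
    exact absurd hA (by simp)
  -- main case: both continuation channels are shared between the two components
  · -- Γ₁ holds c1 and c2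
    have hΓ₁c1 : Γ₁ c1 ≠ none := by
      rw [hΓ₁]; simp [seqCtx]
    obtain ⟨Ud, Tsd, hdnone, hreld, hcont'⟩ := kb_res_inv hcont
    obtain ⟨Γa', Γb', Γ4, o2, κ2, Ts'', hEq2, hVL', hK'', hcomp'⟩ := kb_output_inv hcont'
    have hq2 := congrFun hEq2 c2
    rw [UCtx.update, if_neg (Ne.symm hdc2)] at hq2
    rw [extendList_not_mem (by simp [h24, Ne.symm hcc2])] at hq2
    rw [show (seqCtx c2 false o2 κ2 Ts'' Γ4) c2 = some (.chan
        (.out o2 κ2 (Γ4.usageAt c2)) Ts'') by simp [seqCtx]] at hq2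
    have hΓ₁c2 : Γ₁ c2 ≠ none := by
      rw [hΓ₁]
      simp only [seqCtx]
      rw [if_neg hne21, hq2]
      simp
    -- Γ₂ holds c1 and c2
    have hq3 := congrFun hCtxEq c1
    rw [UCtx.update, if_neg (Ne.symm hec1)] at hq3
    rw [show (seqCtx c1 false o3 κ3 TsB Γ7) c1 = some (.chan
        (.out o3 κ3 (Γ7.usageAt c1)) TsB) by simp [seqCtx]] at hq3
    have hΓ₂c1 : Γ₂ c1 ≠ none := by rw [hq3]; simp
    have hΓ7c2 : Γ7 c2 ≠ none :=
      compC_right_ne_none hcomp2 (by rw [hΓdc2]; simp)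
    have hq4 := congrFun hCtxEq c2
    rw [UCtx.update, if_neg (Ne.symm hec2)] at hq4
    rw [show (seqCtx c1 false o3 κ3 TsB Γ7) c2 =
        Option.map (UType.lift (κ3 + 1)) (Γ7 c2) by simp [seqCtx, hne21]] at hq4
    have hΓ₂c2 : Γ₂ c2 ≠ none := by
      rw [hq4]
      simpa using hΓ7c2
    -- both channels are shared, contradicting degree of sharing 1
    have hsub : ({c1, c2} : Set Name) ⊆ UCtx.shared Γ₁ Γ₂ := by
      intro x hx
      rcases hx with rfl | rfl
      · exact ⟨hΓ₁c1, hΓ₂c1⟩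
      · exact ⟨hΓ₁c2, hΓ₂c2⟩
    have h2le : 2 ≤ (UCtx.shared Γ₁ Γ₂).ncard := by
      rw [← Set.ncard_pair (show c1 ≠ c2 from Ne.symm hne21)]
      exact Set.ncard_le_ncard hsub hfin
    omega

/-- K₁ ⊂ K₂, witnessed by P₂. -/
theorem K1_strict_subset_K2 :
    (∀ P : SProc, Koba 1 P → Koba 2 P) ∧ Koba 2 Ptwo ∧ ¬ Koba 1 Ptwo := by
  refine ⟨?_, ?_, ?_⟩
  · rintro P ⟨Γ, f, Q, Δ, h1, h2, h3, h4⟩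
    exact ⟨Γ, f, Q, Δ, h1, h2, h3, KBTyped_mono one_le_two h4⟩
  · exact koba2_Ptwo
  · exact not_koba1_Ptwo

end Paper
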